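/- For fixed ε > 0, the map x ↦ Σⱼ √((Ψx)ⱼ² + ε²) is convex on ℝⁿ, and hence J_ε(x) = ‖Ax − d‖₂² + λ Σⱼ √((Ψx)ⱼ² + ε²) is convex for every λ ≥ 0; if additionally N(AᵀA) ∩ N(Ψ) = {0} and λ > 0, then J_ε is strictly convex and has a unique global minimizer. -/

import Mathlib

open Matrix

lemma phi_strict {ε : ℝ} (hε : 0 < ε) :
    StrictConvexOn ℝ Set.univ (fun t : ℝ => Real.sqrt (t ^ 2 + ε ^ 2)) := by
  set v : ℝ → EuclideanSpace ℝ (Fin 2) := fun t => (WithLp.equiv 2 (Fin 2 → ℝ)).symm ![t, ε] with hv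
  have hnorm : ∀ t : ℝ, Real.sqrt (t ^ 2 + ε ^ 2) = ‖v t‖ := by
    intro t
    rw [EuclideanSpace.norm_eq]
    congr 1
    simp [hv, Fin.sum_univ_two, Real.norm_eq_abs, sq_abs]
  refine ⟨convex_univ, fun x _ y _ hxy a b ha hb hab => ?_⟩
  have hcomb : v (a * x + b * y) = a • v x + b • v y := by
    ext i
    fin_cases i <;>
      simp [hv, WithLp.equiv_symm_apply, PiLp.smul_apply, PiLp.add_apply, smul_eq_mul]
    · nlinarith [hab]
  have hvx0 : a • v x ≠ 0 := by
    intro h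
    have h1 := congrArg (fun w => w 1) h
    simp [hv, WithLp.equiv_symm_apply, PiLp.smul_apply, smul_eq_mul] at h1
    rcases h1 with h1 | h1 <;> [exact ha.ne' h1; exact hε.ne' h1]
  have hvy0 : b • v y ≠ 0 := by
    intro h
    have h1 := congrArg (fun w => w 1) h
    simp [hv, WithLp.equiv_symm_apply, PiLp.smul_apply, smul_eq_mul] at h1
    rcases h1 with h1 | h1 <;> [exact hb.ne' h1; exact hε.ne' h1]
  have hns : ¬ SameRay ℝ (a • v x) (b • v y) := by
    intro h
    obtain ⟨r₁, r₂, hr₁, hr₂, heq⟩ := h.exists_pos hvx0 hvy0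
    have h0 := congrArg (fun w => w 0) heq
    have h1 := congrArg (fun w => w 1) heq
    simp [hv, WithLp.equiv_symm_apply, PiLp.smul_apply, smul_eq_mul] at h0 h1
    apply hxy
    have hra : r₁ * a = r₂ * b :=
      mul_right_cancel₀ hε.ne' (by linarith [h1] : r₁ * a * ε = r₂ * b * ε)
    have hxy' : r₂ * b * x = r₂ * b * y := by linear_combination h0 - x * hra
    exact mul_left_cancel₀ (by positivity : (r₂ * b : ℝ) ≠ 0) hxy'
  have key : ‖a • v x + b • v y‖ < ‖a • v x‖ + ‖b • v y‖ := norm_add_lt_of_not_sameRay hns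
  show Real.sqrt ((a • x + b • y) ^ 2 + ε ^ 2) < a • Real.sqrt (x ^ 2 + ε ^ 2) + b • Real.sqrt (y ^ 2 + ε ^ 2)
  calc Real.sqrt ((a • x + b • y) ^ 2 + ε ^ 2)
      = ‖v (a * x + b * y)‖ := by rw [← hnorm]; norm_num [smul_eq_mul]
    _ = ‖a • v x + b • v y‖ := by rw [hcomb]
    _ < ‖a • v x‖ + ‖b • v y‖ := key
    _ = a * ‖v x‖ + b * ‖v y‖ := by
        rw [norm_smul, norm_smul, Real.norm_eq_abs, Real.norm_eq_abs,
          abs_of_pos ha, abs_of_pos hb]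
    _ = a • Real.sqrt (x ^ 2 + ε ^ 2) + b • Real.sqrt (y ^ 2 + ε ^ 2) := by
        rw [hnorm, hnorm]; simp [smul_eq_mul]

lemma comb_key {n s : ℕ} (Ψ : Matrix (Fin s) (Fin n) ℝ) (d : Fin s → ℝ)
    (x y : Fin n → ℝ) {a b : ℝ} (hab : a + b = 1) (j : Fin s) :
    Ψ.mulVec (a • x + b • y) j - d j
      = a * (Ψ.mulVec x j - d j) + b * (Ψ.mulVec y j - d j) := by
  rw [Matrix.mulVec_add, Matrix.mulVec_smul, Matrix.mulVec_smul]
  simp only [Pi.add_apply, Pi.smul_apply, smul_eq_mul]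
  have : a * d j + b * d j = d j := by rw [← add_mul, hab, one_mul]
  ring_nf
  linarith [this]

lemma sum_comp_le {n s : ℕ} (Ψ : Matrix (Fin s) (Fin n) ℝ) (φ : ℝ → ℝ)
    (hφ : ConvexOn ℝ Set.univ φ) (d : Fin s → ℝ) (x y : Fin n → ℝ)
    {a b : ℝ} (ha : 0 ≤ a) (hb : 0 ≤ b) (hab : a + b = 1) :
    ∑ j, φ (Ψ.mulVec (a • x + b • y) j - d j)
      ≤ a * ∑ j, φ (Ψ.mulVec x j - d j) + b * ∑ j, φ (Ψ.mulVec y j - d j) := by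
  calc ∑ j, φ (Ψ.mulVec (a • x + b • y) j - d j)
      ≤ ∑ j, (a * φ (Ψ.mulVec x j - d j) + b * φ (Ψ.mulVec y j - d j)) := by
        refine Finset.sum_le_sum fun j _ => ?_
        rw [comb_key Ψ d x y hab j]
        simpa using hφ.2 (Set.mem_univ (Ψ.mulVec x j - d j))
          (Set.mem_univ (Ψ.mulVec y j - d j)) ha hb hab
    _ = _ := by rw [Finset.sum_add_distrib, Finset.mul_sum, Finset.mul_sum]

lemma sum_comp_lt {n s : ℕ} (Ψ : Matrix (Fin s) (Fin n) ℝ) (φ : ℝ → ℝ)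
    (hφ : StrictConvexOn ℝ Set.univ φ) (d : Fin s → ℝ) (x y : Fin n → ℝ)
    (hne : ∃ j, Ψ.mulVec x j ≠ Ψ.mulVec y j)
    {a b : ℝ} (ha : 0 < a) (hb : 0 < b) (hab : a + b = 1) :
    ∑ j, φ (Ψ.mulVec (a • x + b • y) j - d j)
      < a * ∑ j, φ (Ψ.mulVec x j - d j) + b * ∑ j, φ (Ψ.mulVec y j - d j) := by
  obtain ⟨j₀, hj₀⟩ := hne
  calc ∑ j, φ (Ψ.mulVec (a • x + b • y) j - d j)
      < ∑ j, (a * φ (Ψ.mulVec x j - d j) + b * φ (Ψ.mulVec y j - d j)) := by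
        refine Finset.sum_lt_sum (fun j _ => ?_) ⟨j₀, Finset.mem_univ _, ?_⟩
        · rw [comb_key Ψ d x y hab j]
          simpa using hφ.convexOn.2 (Set.mem_univ (Ψ.mulVec x j - d j))
            (Set.mem_univ (Ψ.mulVec y j - d j)) ha.le hb.le hab
        · rw [comb_key Ψ d x y hab j₀]
          have hne' : Ψ.mulVec x j₀ - d j₀ ≠ Ψ.mulVec y j₀ - d j₀ := by
            intro h; exact hj₀ (by linarith)
          simpa using hφ.2 (Set.mem_univ (Ψ.mulVec x j₀ - d j₀))
            (Set.mem_univ (Ψ.mulVec y j₀ - d j₀)) hne' ha hb hab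
    _ = _ := by rw [Finset.sum_add_distrib, Finset.mul_sum, Finset.mul_sum]

set_option maxHeartbeats 1000000 in
/-- The smoothed TV term `x ↦ Σⱼ √((Ψx)ⱼ² + ε²)` is convex; hence
`J_ε(x) = ‖Ax − d‖² + λ Σⱼ √((Ψx)ⱼ² + ε²)` is convex for every `λ ≥ 0`, and
if moreover `N(AᵀA) ∩ N(Ψ) = {0}` and `λ > 0`, then `J_ε` is strictly convex
with a unique global minimizer. -/
theorem stmt_17 {m n s : ℕ} (A : Matrix (Fin m) (Fin n) ℝ)
    (Ψ : Matrix (Fin s) (Fin n) ℝ) (d : Fin m → ℝ) (ε : ℝ) (hε : 0 < ε) :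
    ConvexOn ℝ Set.univ
      (fun x : Fin n → ℝ => ∑ j, Real.sqrt ((Ψ.mulVec x j) ^ 2 + ε ^ 2)) ∧
    (∀ lam : ℝ, 0 ≤ lam →
      ConvexOn ℝ Set.univ (fun x : Fin n → ℝ =>
        (∑ i, (A.mulVec x i - d i) ^ 2)
          + lam * ∑ j, Real.sqrt ((Ψ.mulVec x j) ^ 2 + ε ^ 2))) ∧
    ((∀ x : Fin n → ℝ, (Aᵀ * A).mulVec x = 0 → Ψ.mulVec x = 0 → x = 0) →
      ∀ lam : ℝ, 0 < lam →
        StrictConvexOn ℝ Set.univ (fun x : Fin n → ℝ =>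
          (∑ i, (A.mulVec x i - d i) ^ 2)
            + lam * ∑ j, Real.sqrt ((Ψ.mulVec x j) ^ 2 + ε ^ 2)) ∧
        ∃! x : Fin n → ℝ, ∀ y : Fin n → ℝ,
          (∑ i, (A.mulVec x i - d i) ^ 2)
              + lam * ∑ j, Real.sqrt ((Ψ.mulVec x j) ^ 2 + ε ^ 2)
            ≤ (∑ i, (A.mulVec y i - d i) ^ 2)
              + lam * ∑ j, Real.sqrt ((Ψ.mulVec y j) ^ 2 + ε ^ 2)) := by
  refine ⟨?_, ?_, ?_⟩
  · -- TV term convex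
    refine ⟨convex_univ, fun x _ y _ a b ha hb hab => ?_⟩
    simp only [smul_eq_mul]
    have h2 := sum_comp_le Ψ _ (phi_strict hε).convexOn 0 x y ha hb hab
    simpa [sub_zero] using h2
  · -- J convex for lam ≥ 0
    intro lam hlam
    refine ⟨convex_univ, fun x _ y _ a b ha hb hab => ?_⟩
    simp only [smul_eq_mul]
    have h1 := sum_comp_le A (fun t => t ^ 2) (Even.convexOn_pow even_two) d x y ha hb hab
    have h2 := sum_comp_le Ψ _ (phi_strict hε).convexOn 0 x y ha hb hab
    simp only [Pi.zero_apply, sub_zero] at h2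
    calc (∑ i, (A.mulVec (a • x + b • y) i - d i) ^ 2)
          + lam * ∑ j, Real.sqrt ((Ψ.mulVec (a • x + b • y) j) ^ 2 + ε ^ 2)
        ≤ (a * ∑ i, (A.mulVec x i - d i) ^ 2 + b * ∑ i, (A.mulVec y i - d i) ^ 2)
            + lam * (a * ∑ j, Real.sqrt ((Ψ.mulVec x j) ^ 2 + ε ^ 2)
              + b * ∑ j, Real.sqrt ((Ψ.mulVec y j) ^ 2 + ε ^ 2)) :=
          add_le_add h1 (mul_le_mul_of_nonneg_left h2 hlam)
      _ = _ := by ring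
  · -- strict convexity + unique minimizer
    intro hker lam hlam
    have hsc : StrictConvexOn ℝ Set.univ (fun x : Fin n → ℝ =>
        (∑ i, (A.mulVec x i - d i) ^ 2)
          + lam * ∑ j, Real.sqrt ((Ψ.mulVec x j) ^ 2 + ε ^ 2)) := by
      refine ⟨convex_univ, fun x _ y _ hxy a b ha hb hab => ?_⟩
      simp only [smul_eq_mul]
      by_cases hpsi : ∃ j, Ψ.mulVec x j ≠ Ψ.mulVec y j
      · have hTV := sum_comp_lt Ψ _ (phi_strict hε) 0 x y hpsi ha hb hab
        simp only [Pi.zero_apply, sub_zero] at hTV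
        have hql := sum_comp_le A (fun t => t ^ 2) (Even.convexOn_pow even_two) d x y
          ha.le hb.le hab
        exact lt_of_lt_of_eq (add_lt_add_of_le_of_lt hql
          (mul_lt_mul_of_pos_left hTV hlam)) (by ring)
      · push_neg at hpsi
        have hA : ∃ i, A.mulVec x i ≠ A.mulVec y i := by
          by_contra h; push_neg at h
          have hAz : A.mulVec (x - y) = 0 := by
            rw [Matrix.mulVec_sub]; funext i; simp [h i]
          have hPz : Ψ.mulVec (x - y) = 0 := by
            rw [Matrix.mulVec_sub]; funext j; simp [hpsi j]
          have hz : (Aᵀ * A).mulVec (x - y) = 0 := by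
            rw [← Matrix.mulVec_mulVec, hAz, Matrix.mulVec_zero]
          exact hxy (sub_eq_zero.mp (hker _ hz hPz))
        have hqlt := sum_comp_lt A (fun t => t ^ 2)
          (Even.strictConvexOn_pow even_two two_ne_zero) d x y hA ha hb hab
        have hTVle := sum_comp_le Ψ _ (phi_strict hε).convexOn 0 x y ha.le hb.le hab
        simp only [Pi.zero_apply, sub_zero] at hTVle
        exact lt_of_lt_of_eq (add_lt_add_of_lt_of_le hqlt
          (mul_le_mul_of_nonneg_left hTVle hlam.le)) (by ring)
    refine ⟨hsc, ?_⟩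
    set J : (Fin n → ℝ) → ℝ := fun x =>
      (∑ i, (A.mulVec x i - d i) ^ 2)
        + lam * ∑ j, Real.sqrt ((Ψ.mulVec x j) ^ 2 + ε ^ 2) with hJ
    have hJnn : ∀ x, 0 ≤ J x := fun x =>
      add_nonneg (Finset.sum_nonneg fun i _ => sq_nonneg _)
        (mul_nonneg hlam.le (Finset.sum_nonneg fun j _ => Real.sqrt_nonneg _))
    have hJc : Continuous J := by
      rw [hJ]
      have hcm : ∀ (p : ℕ) (M : Matrix (Fin p) (Fin n) ℝ) (i : Fin p),
          Continuous fun x : Fin n → ℝ => M.mulVec x i := by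
        intro p M i
        simp only [Matrix.mulVec, dotProduct]
        exact continuous_finset_sum _ fun k _ => continuous_const.mul (continuous_apply k)
      exact Continuous.add
        (continuous_finset_sum _ fun i _ => ((hcm m A i).sub continuous_const).pow 2)
        (continuous_const.mul (continuous_finset_sum _ fun j _ =>
          (((hcm s Ψ j).pow 2).add continuous_const).sqrt))
    obtain ⟨xmin, hxmin⟩ : ∃ x : Fin n → ℝ, ∀ y, J x ≤ J y := by
      rcases eq_or_ne n 0 with hn | hn
      · subst hn
        exact ⟨0, fun y => by rw [show y = 0 from funext fun i => i.elim0]⟩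
      · haveI : Nonempty (Fin n) := ⟨⟨0, Nat.pos_of_ne_zero hn⟩⟩
        set g : (Fin n → ℝ) → ℝ := fun x =>
          Real.sqrt (∑ i, (A.mulVec x i) ^ 2) + ∑ j, |Ψ.mulVec x j| with hg
        have hgc : Continuous g := by
          rw [hg]
          have hcm : ∀ (p : ℕ) (M : Matrix (Fin p) (Fin n) ℝ) (i : Fin p),
              Continuous fun x : Fin n → ℝ => M.mulVec x i := by
            intro p M i
            simp only [Matrix.mulVec, dotProduct]
            exact continuous_finset_sum _ fun k _ => continuous_const.mul (continuous_apply k)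
          exact Continuous.add
            (Continuous.sqrt (continuous_finset_sum _ fun i _ => (hcm m A i).pow 2))
            (continuous_finset_sum _ fun j _ => (hcm s Ψ j).abs)
        have hgnn : ∀ x, 0 ≤ g x := fun x =>
          add_nonneg (Real.sqrt_nonneg _) (Finset.sum_nonneg fun j _ => abs_nonneg _)
        have hg0 : ∀ x, g x = 0 → x = 0 := by
          intro x hx
          have hx' : Real.sqrt (∑ i, (A.mulVec x i) ^ 2) + ∑ j, |Ψ.mulVec x j| = 0 := hx
          have hs1 : Real.sqrt (∑ i, (A.mulVec x i) ^ 2) = 0 ∧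
              (∑ j, |Ψ.mulVec x j|) = 0 := by
            constructor <;>
              nlinarith [hx', Real.sqrt_nonneg (∑ i, (A.mulVec x i) ^ 2),
                Finset.sum_nonneg (fun j (_ : j ∈ Finset.univ) => abs_nonneg (Ψ.mulVec x j))]
          have hsum : (∑ i, (A.mulVec x i) ^ 2) = 0 := by
            have hle := Real.sqrt_eq_zero'.mp hs1.1
            have hge : (0:ℝ) ≤ ∑ i, (A.mulVec x i) ^ 2 :=
              Finset.sum_nonneg fun i _ => sq_nonneg _
            linarith
          have hAx : A.mulVec x = 0 := by
            funext i
            have := (Finset.sum_eq_zero_iff_of_nonneg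
              (fun i _ => sq_nonneg (A.mulVec x i))).mp hsum i (Finset.mem_univ i)
            simpa using pow_eq_zero_iff two_ne_zero |>.mp this
          have hPx : Ψ.mulVec x = 0 := by
            funext j
            have := (Finset.sum_eq_zero_iff_of_nonneg
              (fun j _ => abs_nonneg (Ψ.mulVec x j))).mp hs1.2 j (Finset.mem_univ j)
            simpa using abs_eq_zero.mp this
          exact hker x (by rw [← Matrix.mulVec_mulVec, hAx, Matrix.mulVec_zero]) hPx
        obtain ⟨u, hu, humin⟩ := (isCompact_sphere (0 : Fin n → ℝ) 1).exists_isMinOn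
          (NormedSpace.sphere_nonempty.mpr zero_le_one) hgc.continuousOn
        obtain ⟨c, hc⟩ : ∃ c : ℝ, c = g u := ⟨_, rfl⟩
        have hu0 : u ≠ 0 := by
          intro h
          rw [h, mem_sphere_zero_iff_norm, norm_zero] at hu
          exact one_ne_zero hu.symm
        have hcpos : 0 < c := by rw [hc]; exact lt_of_le_of_ne (hgnn u) fun h => hu0 (hg0 u h.symm)
        have hhom : ∀ (t : ℝ), 0 ≤ t → ∀ z, g (t • z) = t * g z := by
          intro t ht z
          rw [hg]
          simp only
          have hA : ∀ i, A.mulVec (t • z) i = t * A.mulVec z i := fun i => by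
            rw [Matrix.mulVec_smul]; simp [smul_eq_mul]
          have hP : ∀ j, Ψ.mulVec (t • z) j = t * Ψ.mulVec z j := fun j => by
            rw [Matrix.mulVec_smul]; simp [smul_eq_mul]
          rw [mul_add]
          congr 1
          · have hsq : (∑ i, (A.mulVec (t • z) i) ^ 2) = t ^ 2 * ∑ i, (A.mulVec z i) ^ 2 := by
              rw [Finset.mul_sum]
              exact Finset.sum_congr rfl fun i _ => by rw [hA i]; ring
            rw [hsq, Real.sqrt_mul (sq_nonneg t), Real.sqrt_sq ht]
          · rw [Finset.mul_sum]
            exact Finset.sum_congr rfl fun j _ => by rw [hP j, abs_mul, abs_of_nonneg ht]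
        have hbound : ∀ x : Fin n → ℝ, c * ‖x‖ ≤ g x := by
          intro x
          rcases eq_or_ne x 0 with rfl | hx0
          · simp [hg, Matrix.mulVec_zero]
          · have hxn : (0:ℝ) < ‖x‖ := norm_pos_iff.mpr hx0
            set w : Fin n → ℝ := ‖x‖⁻¹ • x with hw
            have hwmem : w ∈ Metric.sphere (0 : Fin n → ℝ) 1 := by
              rw [mem_sphere_zero_iff_norm, hw, norm_smul, norm_inv, norm_norm,
                inv_mul_cancel₀ hxn.ne']
            have hcw : c ≤ g w := by rw [hc]; exact humin hwmem
            have hxw : x = ‖x‖ • w := by rw [hw, smul_inv_smul₀ hxn.ne']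
            calc c * ‖x‖ = ‖x‖ * c := by ring
              _ ≤ ‖x‖ * g w := mul_le_mul_of_nonneg_left hcw hxn.le
              _ = g (‖x‖ • w) := (hhom ‖x‖ hxn.le w).symm
              _ = g x := by rw [← hxw]
        obtain ⟨D, hD⟩ : ∃ D : ℝ, D = Real.sqrt (∑ i, (d i) ^ 2) := ⟨_, rfl⟩
        have hDnn : 0 ≤ D := hD ▸ Real.sqrt_nonneg _
        obtain ⟨M, hM⟩ : ∃ M : ℝ, M = J 0 := ⟨_, rfl⟩
        have hMnn : 0 ≤ M := hM ▸ hJnn 0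
        obtain ⟨K, hK⟩ : ∃ K : ℝ, K = max (2 * D + Real.sqrt M + 1) ((M + D ^ 2) / lam + 1) := ⟨_, rfl⟩
        obtain ⟨R, hR⟩ : ∃ R : ℝ, R = (2 / c) * K := ⟨_, rfl⟩
        have hcoer : ∀ x : Fin n → ℝ, R ≤ ‖x‖ → J 0 ≤ J x := by
          intro x hx
          obtain ⟨a, ha⟩ : ∃ a : ℝ, a = Real.sqrt (∑ i, (A.mulVec x i) ^ 2) := ⟨_, rfl⟩
          have hann : 0 ≤ a := ha ▸ Real.sqrt_nonneg _
          obtain ⟨b, hb⟩ : ∃ b : ℝ, b = ∑ j, |Ψ.mulVec x j| := ⟨_, rfl⟩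
          have hbnn : 0 ≤ b := hb ▸ Finset.sum_nonneg fun j _ => abs_nonneg _
          have habK : 2 * K ≤ a + b := by
            have h1 : c * R ≤ c * ‖x‖ := mul_le_mul_of_nonneg_left hx hcpos.le
            have h2 : c * R = 2 * K := by rw [hR]; field_simp
            have h3 : g x = a + b := by rw [hg, ha, hb]
            linarith [hbound x]
          have hcase : K ≤ a ∨ K ≤ b := by
            by_contra h; push_neg at h; linarith [h.1, h.2]
          have hTb : b ≤ ∑ j, Real.sqrt ((Ψ.mulVec x j) ^ 2 + ε ^ 2) := by
            rw [hb]
            refine Finset.sum_le_sum fun j _ => ?_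
            rw [← Real.sqrt_sq_eq_abs]
            exact Real.sqrt_le_sqrt (by nlinarith [sq_nonneg ε])
          have hq_expand : (∑ i, (A.mulVec x i - d i) ^ 2)
              = (∑ i, (A.mulVec x i) ^ 2) - 2 * (∑ i, A.mulVec x i * d i)
                + ∑ i, (d i) ^ 2 := by
            rw [Finset.sum_congr rfl fun i (_ : i ∈ Finset.univ) =>
              (by ring : (A.mulVec x i - d i) ^ 2
                = ((A.mulVec x i) ^ 2 - 2 * (A.mulVec x i * d i) + (d i) ^ 2))]
            rw [Finset.sum_add_distrib, Finset.sum_sub_distrib, Finset.mul_sum]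
          have hCS : (∑ i, A.mulVec x i * d i) ≤ a * D := by
            rw [ha, hD]; exact Real.sum_mul_le_sqrt_mul_sqrt _ _ _
          have hsa : (∑ i, (A.mulVec x i) ^ 2) = a * a := by
            rw [ha]; exact (Real.mul_self_sqrt (Finset.sum_nonneg fun i _ => sq_nonneg _)).symm
          have hsd : (∑ i, (d i) ^ 2) = D * D := by
            rw [hD]; exact (Real.mul_self_sqrt (Finset.sum_nonneg fun i _ => sq_nonneg _)).symm
          have hqlb : a * a - 2 * (a * D) ≤ ∑ i, (A.mulVec x i - d i) ^ 2 := by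
            rw [hq_expand, hsa, hsd]
            nlinarith [hCS, mul_self_nonneg D]
          have hMs : Real.sqrt M * Real.sqrt M = M := Real.mul_self_sqrt hMnn
          have hTnn : (0:ℝ) ≤ ∑ j, Real.sqrt ((Ψ.mulVec x j) ^ 2 + ε ^ 2) :=
            Finset.sum_nonneg fun j _ => Real.sqrt_nonneg _
          have hJx : J x = (∑ i, (A.mulVec x i - d i) ^ 2)
              + lam * ∑ j, Real.sqrt ((Ψ.mulVec x j) ^ 2 + ε ^ 2) := by rw [hJ]
          rw [hJx, ← hM]
          rcases hcase with hKa | hKb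
          · have h1 : 2 * D + Real.sqrt M + 1 ≤ a := by rw [hK] at hKa; exact le_trans (le_max_left _ _) hKa
            have h2 : M ≤ a * a - 2 * (a * D) := by
              nlinarith [Real.sqrt_nonneg M, hDnn, hMs]
            have h3 : 0 ≤ lam * ∑ j, Real.sqrt ((Ψ.mulVec x j) ^ 2 + ε ^ 2) :=
              mul_nonneg hlam.le hTnn
            linarith
          · have h1 : (M + D ^ 2) / lam + 1 ≤ b := by rw [hK] at hKb; exact le_trans (le_max_right _ _) hKb
            have h2 : M + D ^ 2 + lam ≤ lam * b := by
              have h4 := mul_le_mul_of_nonneg_left h1 hlam.le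
              have h5 : lam * ((M + D ^ 2) / lam + 1) = M + D ^ 2 + lam := by
                field_simp
              linarith
            have h3 : (0:ℝ) ≤ ∑ i, (A.mulVec x i - d i) ^ 2 :=
              Finset.sum_nonneg fun i _ => sq_nonneg _
            have h4 : lam * b ≤ lam * ∑ j, Real.sqrt ((Ψ.mulVec x j) ^ 2 + ε ^ 2) :=
              mul_le_mul_of_nonneg_left hTb hlam.le
            nlinarith [sq_nonneg D]
        have hev : ∀ᶠ x in Filter.cocompact (Fin n → ℝ), J 0 ≤ J x := by
          filter_upwards [tendsto_norm_cocompact_atTop.eventually_ge_atTop R] with x hx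
            using hcoer x hx
        exact hJc.exists_forall_le' 0 hev
    refine ⟨xmin, hxmin, fun y hy => ?_⟩
    by_contra hne
    have h1 : J xmin = J y := le_antisymm (hxmin y) (hy xmin)
    have hmid := hsc.2 (Set.mem_univ y) (Set.mem_univ xmin) hne
      (by norm_num : (0:ℝ) < 1/2) (by norm_num : (0:ℝ) < 1/2) (by norm_num)
    have h2 := hxmin ((1/2 : ℝ) • y + (1/2 : ℝ) • xmin)
    simp only [smul_eq_mul] at hmid
    have h3 : J ((1/2 : ℝ) • y + (1/2 : ℝ) • xmin)
        < 1/2 * J y + 1/2 * J xmin := hmid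
    rw [h1] at h3
    have h4 : J xmin ≤ J ((1/2 : ℝ) • y + (1/2 : ℝ) • xmin) := h2
    rw [h1] at h4
    linarith
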